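/- Let z_1, …, z_n be i.i.d. Rademacher random variables (each equal to +1 or −1 with probability 1/2), and let S_n = Σ_{i=1}^n z_i. Then for every c with 0 < c ≤ 1/(32n): E[ exp( c·(S_n² − n) ) ] ≤ exp(cn). -/

import Mathlib

set_option autoImplicit false

open MeasureTheory ProbabilityTheory

private lemma rad_abs_sinh_le_cosh (x : ℝ) : |Real.sinh x| ≤ Real.cosh x := by
  rw [Real.abs_sinh, ← Real.cosh_abs]
  exact (Real.sinh_lt_cosh _).le

/-- The key induction: if the `z i` are a.e. `±1`, mean zero, independent, then
`E[exp(a (∑_{i∈s} z i)²)] ≤ exp(2 a |s|)` whenever `0 ≤ a` and `16 a |s| ≤ 1`. -/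
private lemma rad_aux
    {Ω : Type*} [MeasurableSpace Ω] (μ : Measure Ω) [IsProbabilityMeasure μ]
    {n : ℕ} (z : Fin n → Ω → ℝ)
    (hmeas : ∀ i, Measurable (z i))
    (hindep : iIndepFun z μ)
    (hpm : ∀ᵐ ω ∂μ, ∀ i, z i ω = 1 ∨ z i ω = -1)
    (hmean : ∀ i, ∫ ω, z i ω ∂μ = 0) :
    ∀ (s : Finset (Fin n)) (a : ℝ), 0 ≤ a → 16 * a * s.card ≤ 1 →
      ∫ ω, Real.exp (a * (∑ i ∈ s, z i ω) ^ 2) ∂μ ≤ Real.exp (2 * a * s.card) := by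
  classical
  intro s
  induction s using Finset.induction_on with
  | empty =>
      intro a ha hcard
      simp
  | @insert j t hj ih =>
      intro a ha hcard
      set T : Ω → ℝ := fun ω => ∑ i ∈ t, z i ω with hT
      have hTmeas : Measurable T := Finset.measurable_sum _ (fun i _ => hmeas i)
      set m : ℝ := (t.card : ℝ) with hm
      have hm0 : 0 ≤ m := Nat.cast_nonneg _
      have hcard' : 16 * a * (m + 1) ≤ 1 := by
        have : ((insert j t).card : ℝ) = m + 1 := by
          rw [Finset.card_insert_of_notMem hj]; push_cast; ring
        rwa [this] at hcard
      -- a.e. bound on |T|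
      have hTbd : ∀ᵐ ω ∂μ, |T ω| ≤ m := by
        filter_upwards [hpm] with ω hω
        calc |T ω| ≤ ∑ i ∈ t, |z i ω| := Finset.abs_sum_le_sum_abs _ _
          _ ≤ ∑ _i ∈ t, (1 : ℝ) := by
              refine Finset.sum_le_sum fun i _ => ?_
              rcases hω i with h | h <;> rw [h] <;> norm_num
          _ = m := by rw [Finset.sum_const, nsmul_eq_mul, mul_one]
      set a' : ℝ := a + 2 * a ^ 2 with ha'def
      have ha' : 0 ≤ a' := by positivity
      have hcard2 : 16 * a' * m ≤ 1 := by
        nlinarith [mul_nonneg ha hm0, mul_nonneg (mul_nonneg ha ha) hm0, sq_nonneg a]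
      -- the three auxiliary functions
      set g2 : Ω → ℝ := fun ω => Real.exp (a * T ω ^ 2) * Real.cosh (2 * a * T ω) with hg2
      set g3 : Ω → ℝ := fun ω => Real.exp (a * T ω ^ 2) * Real.sinh (2 * a * T ω) with hg3
      set g4 : Ω → ℝ := fun ω => Real.exp (a' * T ω ^ 2) with hg4
      have hg2m : Measurable g2 :=
        ((measurable_const.mul (hTmeas.pow_const 2)).exp).mul
          ((measurable_const.mul hTmeas).cosh)
      have hg3m : Measurable g3 :=
        ((measurable_const.mul (hTmeas.pow_const 2)).exp).mul
          ((measurable_const.mul hTmeas).sinh)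
      have hg4m : Measurable g4 := (measurable_const.mul (hTmeas.pow_const 2)).exp
      have hg2le : ∀ ω, g2 ω ≤ g4 ω := by
        intro ω
        have h1 : Real.cosh (2 * a * T ω) ≤ Real.exp ((2 * a * T ω) ^ 2 / 2) :=
          Real.cosh_le_exp_half_sq _
        calc g2 ω ≤ Real.exp (a * T ω ^ 2) * Real.exp ((2 * a * T ω) ^ 2 / 2) :=
              mul_le_mul_of_nonneg_left h1 (Real.exp_nonneg _)
          _ = g4 ω := by rw [← Real.exp_add]; congr 1; ring
      have hg4bd : ∀ᵐ ω ∂μ, ‖g4 ω‖ ≤ Real.exp (a' * m ^ 2) := by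
        filter_upwards [hTbd] with ω hω
        rw [Real.norm_eq_abs, abs_of_nonneg (Real.exp_nonneg _)]
        apply Real.exp_le_exp.2
        apply mul_le_mul_of_nonneg_left _ ha'
        calc T ω ^ 2 = |T ω| ^ 2 := (sq_abs _).symm
          _ ≤ m ^ 2 := by nlinarith [abs_nonneg (T ω)]
      have hg4int : Integrable g4 μ :=
        (integrable_const (Real.exp (a' * m ^ 2))).mono' hg4m.aestronglyMeasurable hg4bd
      have hg2int : Integrable g2 μ := by
        refine (integrable_const (Real.exp (a' * m ^ 2))).mono' hg2m.aestronglyMeasurable ?_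
        filter_upwards [hg4bd] with ω hω
        rw [Real.norm_eq_abs, abs_of_nonneg (by positivity)]
        refine (hg2le ω).trans ?_
        rw [Real.norm_eq_abs, abs_of_nonneg (Real.exp_nonneg _)] at hω
        exact hω
      have hg3bd : ∀ᵐ ω ∂μ, ‖g3 ω‖ ≤ Real.exp (a' * m ^ 2) := by
        filter_upwards [hg4bd] with ω hω
        rw [Real.norm_eq_abs, abs_of_nonneg (Real.exp_nonneg _)] at hω
        rw [Real.norm_eq_abs, abs_mul, abs_of_nonneg (Real.exp_nonneg _)]
        calc Real.exp (a * T ω ^ 2) * |Real.sinh (2 * a * T ω)|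
            ≤ Real.exp (a * T ω ^ 2) * Real.cosh (2 * a * T ω) :=
              mul_le_mul_of_nonneg_left (rad_abs_sinh_le_cosh _) (Real.exp_nonneg _)
          _ ≤ g4 ω := hg2le ω
          _ ≤ _ := hω
      have hg3int : Integrable g3 μ :=
        (integrable_const (Real.exp (a' * m ^ 2))).mono' hg3m.aestronglyMeasurable hg3bd
      have hzjint : Integrable (z j) μ := by
        refine (integrable_const (1 : ℝ)).mono' (hmeas j).aestronglyMeasurable ?_
        filter_upwards [hpm] with ω hω
        rcases hω j with h | h <;> rw [Real.norm_eq_abs, h] <;> norm_num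
      have hg3zjint : Integrable (fun ω => g3 ω * z j ω) μ := by
        refine (integrable_const (Real.exp (a' * m ^ 2))).mono'
          (hg3m.mul (hmeas j)).aestronglyMeasurable ?_
        filter_upwards [hg3bd, hpm] with ω hω hω'
        rw [Real.norm_eq_abs, abs_mul]
        have : |z j ω| = 1 := by rcases hω' j with h | h <;> rw [h] <;> norm_num
        rw [this, mul_one]
        rw [Real.norm_eq_abs] at hω
        exact hω
      -- independence of g3 and z j
      have hTind : IndepFun T (z j) μ := by
        have h := hindep.indepFun_finsetSum_of_notMem hmeas hj
        have : T = ∑ i ∈ t, z i := by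
          funext ω; rw [Finset.sum_apply]
        rwa [this]
      have hg3ind : IndepFun g3 (z j) μ := by
        have hφ : Measurable fun x : ℝ =>
            Real.exp (a * x ^ 2) * Real.sinh (2 * a * x) :=
          ((measurable_const.mul ((measurable_id.pow_const 2))).exp).mul
            ((measurable_const.mul measurable_id).sinh)
        exact hTind.comp hφ measurable_id
      -- a.e. pointwise identity
      have hkey : ∀ᵐ ω ∂μ,
          Real.exp (a * (∑ i ∈ insert j t, z i ω) ^ 2)
            = Real.exp a * (g2 ω + g3 ω * z j ω) := by
        filter_upwards [hpm] with ω hω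
        rw [Finset.sum_insert hj]
        simp only [hg2, hg3]
        rcases hω j with h | h <;> rw [h]
        · have h1 : a * (1 + T ω) ^ 2 = a + a * T ω ^ 2 + 2 * a * T ω := by ring
          rw [h1, Real.exp_add, Real.exp_add, ← Real.cosh_add_sinh (2 * a * T ω)]
          ring
        · have h1 : a * (-1 + T ω) ^ 2 = a + a * T ω ^ 2 + -(2 * a * T ω) := by ring
          rw [h1, Real.exp_add, Real.exp_add, ← Real.cosh_sub_sinh (2 * a * T ω)]
          ring
      calc ∫ ω, Real.exp (a * (∑ i ∈ insert j t, z i ω) ^ 2) ∂μ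
          = ∫ ω, Real.exp a * (g2 ω + g3 ω * z j ω) ∂μ := integral_congr_ae hkey
        _ = Real.exp a * ((∫ ω, g2 ω ∂μ) + ∫ ω, g3 ω * z j ω ∂μ) := by
            rw [integral_const_mul, integral_add hg2int hg3zjint]
        _ = Real.exp a * ∫ ω, g2 ω ∂μ := by
            have hmul : ∫ ω, g3 ω * z j ω ∂μ = (∫ ω, g3 ω ∂μ) * ∫ ω, z j ω ∂μ :=
              hg3ind.integral_fun_mul_eq_mul_integral hg3int.aestronglyMeasurable hzjint.aestronglyMeasurable
            rw [hmul, hmean j, mul_zero, add_zero]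
        _ ≤ Real.exp a * ∫ ω, g4 ω ∂μ := by
            apply mul_le_mul_of_nonneg_left _ (Real.exp_nonneg _)
            exact integral_mono hg2int hg4int hg2le
        _ ≤ Real.exp a * Real.exp (2 * a' * m) := by
            apply mul_le_mul_of_nonneg_left _ (Real.exp_nonneg _)
            exact ih a' ha' hcard2
        _ ≤ Real.exp (2 * a * ((insert j t).card : ℝ)) := by
            rw [← Real.exp_add]
            apply Real.exp_le_exp.2
            have : ((insert j t).card : ℝ) = m + 1 := by
              rw [Finset.card_insert_of_notMem hj]; push_cast; ring
            rw [this]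
            nlinarith [mul_nonneg ha hm0, mul_nonneg (mul_nonneg ha ha) hm0]

/-- The Rademacher moment-generating-function bound used in the proof of
Theorem 5: `E[exp(c(Sₙ² − n))] ≤ exp(cn)` for `0 < c ≤ 1/(32n)`. -/
theorem rademacher_square_mgf_bound
    {Ω : Type*} [MeasurableSpace Ω] (μ : Measure Ω) [IsProbabilityMeasure μ]
    (n : ℕ) (hn : 0 < n)
    (z : Fin n → Ω → ℝ)
    (hmeas : ∀ i, Measurable (z i))
    (hindep : iIndepFun z μ)
    (hone : ∀ i, μ {ω | z i ω = 1} = ENNReal.ofReal (1 / 2))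
    (hmone : ∀ i, μ {ω | z i ω = -1} = ENNReal.ofReal (1 / 2))
    (c : ℝ) (hc0 : 0 < c) (hc : c ≤ 1 / (32 * n)) :
    ∫ ω, Real.exp (c * ((∑ i, z i ω) ^ 2 - n)) ∂μ ≤ Real.exp (c * n) := by
  classical
  set A : Fin n → Set Ω := fun i => {ω | z i ω = 1} with hA
  set B : Fin n → Set Ω := fun i => {ω | z i ω = -1} with hB
  have hAmeas : ∀ i, MeasurableSet (A i) := fun i => (hmeas i) (measurableSet_singleton 1)
  have hBmeas : ∀ i, MeasurableSet (B i) := fun i => (hmeas i) (measurableSet_singleton (-1))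
  have hdisj : ∀ i, Disjoint (A i) (B i) := by
    intro i
    rw [Set.disjoint_left]
    intro ω hω1 hω2
    simp only [hA, hB, Set.mem_setOf_eq] at hω1 hω2
    rw [hω1] at hω2; norm_num at hω2
  have hunion : ∀ i, μ (A i ∪ B i) = 1 := by
    intro i
    rw [measure_union (hdisj i) (hBmeas i), hone i, hmone i, ← ENNReal.ofReal_add
      (by norm_num) (by norm_num)]
    norm_num
  have hfull : ∀ i, ∀ᵐ ω ∂μ, z i ω = 1 ∨ z i ω = -1 := by
    intro i
    have h0 : μ (A i ∪ B i)ᶜ = 0 := by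
      rw [prob_compl_eq_zero_iff ((hAmeas i).union (hBmeas i))]
      exact hunion i
    rw [ae_iff]
    have hset : {ω | ¬(z i ω = 1 ∨ z i ω = -1)} = (A i ∪ B i)ᶜ := by
      ext ω
      simp [hA, hB, Set.mem_union, Set.mem_setOf_eq, not_or]
    rw [hset]
    exact h0
  have hpm : ∀ᵐ ω ∂μ, ∀ i, z i ω = 1 ∨ z i ω = -1 := ae_all_iff.2 hfull
  have hmean : ∀ i, ∫ ω, z i ω ∂μ = 0 := by
    intro i
    have hae : z i =ᵐ[μ] fun ω =>
        (A i).indicator (fun _ => (1 : ℝ)) ω + (B i).indicator (fun _ => (-1 : ℝ)) ω := by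
      filter_upwards [hfull i] with ω hω
      rcases hω with h | h
      · have hωA : ω ∈ A i := h
        have hωB : ω ∉ B i := fun hB' => (hdisj i).le_bot ⟨hωA, hB'⟩
        rw [Set.indicator_of_mem hωA, Set.indicator_of_notMem hωB, h]; ring
      · have hωB : ω ∈ B i := h
        have hωA : ω ∉ A i := fun hA' => (hdisj i).le_bot ⟨hA', hωB⟩
        rw [Set.indicator_of_notMem hωA, Set.indicator_of_mem hωB, h]; ring
    rw [integral_congr_ae hae, integral_add
      ((integrable_const (1 : ℝ)).indicator (hAmeas i))
      ((integrable_const (-1 : ℝ)).indicator (hBmeas i))]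
    rw [integral_indicator_const (1 : ℝ) (hAmeas i),
      integral_indicator_const (-1 : ℝ) (hBmeas i), measureReal_def, measureReal_def, hone i, hmone i]
    rw [ENNReal.toReal_ofReal (by norm_num : (0:ℝ) ≤ 1 / 2)]
    simp
  have hnpos : (0 : ℝ) < (n : ℝ) := by exact_mod_cast hn
  have h32 : (0 : ℝ) < 32 * (n : ℝ) := by positivity
  rw [le_div_iff₀ h32] at hc
  have hN : (((Finset.univ : Finset (Fin n)).card : ℝ)) = (n : ℝ) := by simp
  have hcardn : 16 * c * (((Finset.univ : Finset (Fin n)).card : ℝ)) ≤ 1 := by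
    rw [hN]; nlinarith
  have haux := rad_aux μ z hmeas hindep hpm hmean Finset.univ c hc0.le hcardn
  rw [hN] at haux
  have hrw : ∀ ω, Real.exp (c * ((∑ i, z i ω) ^ 2 - (n : ℝ))) =
      Real.exp (c * (∑ i ∈ Finset.univ, z i ω) ^ 2) / Real.exp (c * n) := by
    intro ω
    rw [mul_sub, Real.exp_sub]
  simp_rw [hrw]
  rw [integral_div, div_le_iff₀ (Real.exp_pos _), ← Real.exp_add]
  have : c * (n : ℝ) + c * n = 2 * c * n := by ring
  rw [this]
  exact haux
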